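/- Let κ be a singular cardinal, σ = cf(κ), and let ⟨κ_i : i < σ⟩ be a strictly increasing sequence of regular cardinals with supremum κ such that σ < κ_i < κ for every i < σ. Let λ be a cardinal with λ > 2^κ. Then λ^κ = sup_{i<σ} λ^{κ_i} = sup_{i<σ} cf([λ]^{≤κ_i}, ⊆). -/

import Mathlib

open Cardinal Set Ordinal

universe u

/-- `cf([Y]^{≤κ}, ⊆)`: the least cardinality of a family of subsets of `Y` of
cardinality `≤ κ` which is cofinal under inclusion among all such subsets. -/
noncomputable def covCof (Y : Type u) (κ : Cardinal.{u}) : Cardinal.{u} :=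
  sInf {c : Cardinal.{u} |
    ∃ Q : Set {s : Set Y // #s ≤ κ}, #Q = c ∧
      ∀ a : {s : Set Y // #s ≤ κ}, ∃ b ∈ Q, a.1 ⊆ b.1}

/-- If `κ` is singular with `σ = cf(κ)`, `⟨κ_i : i < σ⟩` is a strictly increasing
sequence of regular cardinals with supremum `κ` and `σ < κ_i < κ`, and
`λ > 2^κ`, then `λ^κ = sup_i λ^{κ_i} = sup_i cf([λ]^{≤κ_i}, ⊆)`. -/

lemma gmain {κ : Cardinal.{u}} {ι : Type u} [Nonempty ι] (κs : ι → Cardinal.{u})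
    (hκinf : ℵ₀ ≤ κ) (hsing : κ.ord.cof < κ)
    (hsupκ : (⨆ i, κs i) = κ) :
    ∀ lam : Cardinal.{u}, 2 ^ κ < lam → lam ^ κ ≤ ⨆ i, lam ^ κs i := by
  intro lam0
  refine WellFoundedLT.induction
    (motive := fun l : Cardinal.{u} => 2 ^ κ < l → l ^ κ ≤ ⨆ i, l ^ κs i) lam0 ?_
  intro lam IH hlam
  have hκlam : κ < lam := (cantor κ).trans hlam
  have hlaminf : ℵ₀ ≤ lam := hκinf.trans hκlam.le
  have hlam0 : lam ≠ 0 := by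
    rintro rfl; exact absurd hκlam (by simp)
  by_cases hA : ∃ μ, μ < lam ∧ lam ≤ μ ^ κ
  · obtain ⟨μ, hμlt, hμpow⟩ := hA
    have hμ2 : 2 ^ κ < μ := by
      by_contra hcon
      push_neg at hcon
      have h1 : μ ^ κ ≤ (2 ^ κ) ^ κ := power_le_power_right hcon
      rw [← power_mul, mul_eq_self hκinf] at h1
      exact absurd (hμpow.trans h1) (not_le.mpr hlam)
    calc lam ^ κ ≤ (μ ^ κ) ^ κ := power_le_power_right hμpow
      _ = μ ^ κ := by rw [← power_mul, mul_eq_self hκinf]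
      _ ≤ ⨆ i, μ ^ κs i := IH μ hμlt hμ2
      _ ≤ ⨆ i, lam ^ κs i :=
        ciSup_mono (Cardinal.bddAbove_range _) fun i => power_le_power_right hμlt.le
  · push_neg at hA
    have hB : ∀ μ, μ < lam → μ ^ κ < lam := hA
    have hbase : ∀ τ, τ < κ → lam ^ τ ≤ ⨆ i, lam ^ κs i := by
      intro τ hτ
      have hτ' : τ < ⨆ i, κs i := hsupκ ▸ hτ
      obtain ⟨i, hi⟩ := (lt_ciSup_iff (Cardinal.bddAbove_range κs)).mp hτ'
      exact (power_le_power_left hlam0 hi.le).trans (le_ciSup (Cardinal.bddAbove_range _) i)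
    have hmkT : #(lam.ord.ToType) = lam := by rw [mk_toType, card_ord]
    have hmkK : #(κ.ord.ToType) = κ := by rw [mk_toType, card_ord]
    have hpow : lam ^ κ = #(κ.ord.ToType → lam.ord.ToType) := by
      rw [← power_def, hmkT, hmkK]
    have hlim := isSuccLimit_ord hlaminf
    rcases le_or_gt (lam.ord.cof) κ with hcof | hcof
    · -- cof ≤ κ
      have hτκ : lam.ord.cof < κ := by
        rcases lt_or_eq_of_le hcof with h | h
        · exact h
        · exfalso
          have hreg := isRegular_cof hlim
          rw [h] at hreg
          exact absurd hreg.2 (not_le.mpr hsing)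
      obtain ⟨S, hSunb, hScard⟩ :=
        Order.exists_cof_eq lam.ord.ToType
      rw [Ordinal.cof_toType] at hScard
      haveI : NoMaxOrder lam.ord.ToType := toType_noMax_of_succ_lt (fun a ha => hlim.succ_lt ha)
      have hinj : lam ^ κ ≤
          #(Π b : S, (κ.ord.ToType → Option (Iio (b : lam.ord.ToType)))) := by
        rw [hpow]
        refine mk_le_of_injective
          (f := fun f b x => if h : f x < (b : lam.ord.ToType)
            then some (⟨f x, h⟩ : Iio (b : lam.ord.ToType)) else none) ?_
        intro f g hfg
        funext x
        obtain ⟨c, hc⟩ := exists_gt (max (f x) (g x))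
        obtain ⟨b, hbS, hbc⟩ := hSunb c
        have hcb : c ≤ b := hbc
        have hfb : f x < b := ((le_max_left _ _).trans_lt hc).trans_le hcb
        have hgb : g x < b := ((le_max_right _ _).trans_lt hc).trans_le hcb
        have h1 := congrFun (congrFun hfg ⟨b, hbS⟩) x
        simpa [hfb, hgb, Subtype.ext_iff] using h1
      have hcount : #(Π b : S, (κ.ord.ToType → Option (Iio (b : lam.ord.ToType)))) ≤
          lam ^ (#S) := by
        rw [mk_pi, ← prod_const']
        refine prod_le_prod _ _ fun b => ?_
        have h2 : #(κ.ord.ToType → Option (Iio (b : lam.ord.ToType))) =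
            (#(Iio (b : lam.ord.ToType)) + 1) ^ κ := by
          rw [← power_def, mk_option, hmkK]
        rw [h2]
        have hb1 : #(Iio (b : lam.ord.ToType)) + 1 < lam :=
          add_lt_of_lt hlaminf (mk_Iio_ord_toType _) (one_lt_aleph0.trans_le hlaminf)
        exact (hB _ hb1).le
      rw [hScard] at hcount
      exact (hinj.trans hcount).trans (hbase _ hτκ)
    · -- κ < cof
      have hbd : ∀ f : κ.ord.ToType → lam.ord.ToType, ∃ b, ∀ x, f x < b := by
        intro f
        by_contra hcon
        push_neg at hcon
        have hub : IsCofinal (Set.range f) := by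
          intro a
          obtain ⟨x, hx⟩ := hcon a
          exact ⟨f x, mem_range_self x, hx⟩
        have h1 := Order.cof_le hub
        rw [Ordinal.cof_toType] at h1
        exact absurd (h1.trans (mk_range_le.trans_eq hmkK)) (not_le.mpr hcof)
      choose bnd hbnd using hbd
      have hinj : lam ^ κ ≤ #(Σ b : lam.ord.ToType, (κ.ord.ToType → Iio b)) := by
        rw [hpow]
        refine mk_le_of_injective
          (f := fun f => ⟨bnd f, fun x => ⟨f x, hbnd f x⟩⟩) ?_
        intro f g hfg
        funext x
        have h1 := congrFun (congrArg
          (fun p : Σ b : lam.ord.ToType, (κ.ord.ToType → Iio b) =>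
            fun x => ((p.2 x : Iio p.1) : lam.ord.ToType)) hfg) x
        simpa using h1
      have hcount : #(Σ b : lam.ord.ToType, (κ.ord.ToType → Iio b)) ≤ lam := by
        rw [mk_sigma]
        calc (sum fun b : lam.ord.ToType => #(κ.ord.ToType → Iio b))
            ≤ sum fun _ : lam.ord.ToType => lam := by
              refine sum_le_sum _ _ fun b => ?_
              have h2 : #(κ.ord.ToType → Iio b) = #(Iio b) ^ κ := by
                rw [← power_def, hmkK]
              rw [h2]
              exact (hB _ (mk_Iio_ord_toType _)).le
          _ = lam * lam := by rw [sum_const', hmkT]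
          _ = lam := mul_eq_self hlaminf
      have hone : lam ≤ ⨆ i, lam ^ κs i := by
        have := hbase 1 (one_lt_aleph0.trans_le hκinf)
        rwa [power_one] at this
      exact (hinj.trans hcount).trans hone

lemma mk_bounded_eq {lam c : Cardinal.{u}} (hc : ℵ₀ ≤ c) (hclam : c ≤ lam) :
    #{s : Set lam.ord.ToType // #s ≤ c} = lam ^ c := by
  have hlaminf : ℵ₀ ≤ lam := hc.trans hclam
  have hmkT : #(lam.ord.ToType) = lam := by rw [mk_toType, card_ord]
  have hmkK : #(c.ord.ToType) = c := by rw [mk_toType, card_ord]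
  apply le_antisymm
  · have h1 := mk_bounded_set_le (lam.ord.ToType) c
    rwa [hmkT, max_eq_left (hlaminf)] at h1
  · have h1 : #(c.ord.ToType × lam.ord.ToType) = #(lam.ord.ToType) := by
      rw [mk_prod, Cardinal.lift_id, Cardinal.lift_id, hmkK]
      conv_rhs => rw [hmkT]
      rw [hmkT, mul_eq_max hc hlaminf, max_eq_right hclam]
    obtain ⟨e⟩ := Cardinal.eq.mp h1
    have hpow : lam ^ c = #(c.ord.ToType → lam.ord.ToType) := by
      rw [← power_def, hmkT, hmkK]
    rw [hpow]
    have hbound : ∀ f : c.ord.ToType → lam.ord.ToType,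
        #(e '' (range fun x => (x, f x)) : Set lam.ord.ToType) ≤ c := by
      intro f
      refine mk_image_le.trans (mk_range_le.trans_eq hmkK)
    refine mk_le_of_injective (f := fun f => ⟨e '' (range fun x => (x, f x)), hbound f⟩) ?_
    intro f g hfg
    funext x
    have h2 : e '' (range fun x => (x, f x)) = e '' (range fun x => (x, g x)) :=
      congrArg Subtype.val hfg
    have h3 : (range fun x => (x, f x)) = (range fun x => (x, g x)) :=
      (Set.image_injective.mpr e.injective) h2
    have h4 : (x, f x) ∈ range fun x => (x, g x) := h3 ▸ mem_range_self x
    obtain ⟨y, hy⟩ := h4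
    have h5 : y = x := congrArg Prod.fst hy
    subst h5
    exact (congrArg Prod.snd hy).symm

lemma covCof_eq {lam c : Cardinal.{u}} (hc : ℵ₀ ≤ c) (hclam : c ≤ lam)
    (h2 : 2 ^ c < lam) :
    covCof lam.ord.ToType c = lam ^ c := by
  have hlaminf : ℵ₀ ≤ lam := hc.trans hclam
  have hfull := mk_bounded_eq hc hclam
  apply le_antisymm
  · apply csInf_le (OrderBot.bddBelow _)
    exact ⟨Set.univ, by rw [mk_univ, hfull], fun a => ⟨a, mem_univ a, subset_rfl⟩⟩
  · apply le_csInf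
    · exact ⟨_, Set.univ, rfl, fun a => ⟨a, mem_univ a, subset_rfl⟩⟩
    · rintro b ⟨Q, hQmk, hQcof⟩
      choose g hgQ hgsub using hQcof
      have hinj : lam ^ c ≤
          #(Σ q : Q, Set ((q.1.1 : Set lam.ord.ToType))) := by
        rw [← hfull]
        refine mk_le_of_injective (f := fun a =>
          ⟨⟨g a, hgQ a⟩, {y : ((g a).1 : Set lam.ord.ToType) |
            (y : lam.ord.ToType) ∈ a.1}⟩) ?_
        intro a a' haa
        have key : ∀ A : {s : Set lam.ord.ToType // #s ≤ c},
            Subtype.val '' {y : ((g A).1 : Set lam.ord.ToType) |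
              (y : lam.ord.ToType) ∈ A.1} = A.1 := by
          intro A
          ext z
          constructor
          · rintro ⟨y, hy, rfl⟩; exact hy
          · intro hz; exact ⟨⟨z, hgsub A hz⟩, hz, rfl⟩
        have h3 := congrArg (fun p : (Σ q : Q, Set ((q.1.1 : Set lam.ord.ToType))) =>
          Subtype.val '' p.2) haa
        simp only at h3
        rw [key a, key a'] at h3
        exact Subtype.ext h3
      have hcount : #(Σ q : Q, Set ((q.1.1 : Set lam.ord.ToType))) ≤ b * 2 ^ c := by
        rw [mk_sigma]
        calc (sum fun q : Q => #(Set ((q.1.1 : Set lam.ord.ToType))))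
            ≤ sum fun _ : Q => 2 ^ c := by
              refine sum_le_sum _ _ fun q => ?_
              rw [mk_set]
              exact power_le_power_left two_ne_zero q.1.2
          _ = #Q * 2 ^ c := sum_const' _ _
          _ = b * 2 ^ c := by rw [hQmk]
      have hle := hinj.trans hcount
      by_contra hcon
      push_neg at hcon
      have h2c : 2 ^ c < lam ^ c :=
        h2.trans_le (self_le_power lam (one_le_aleph0.trans hc))
      have hℵ : ℵ₀ < lam ^ c := (hc.trans (cantor c).le).trans_lt h2c
      have hmax : max (max b (2 ^ c)) ℵ₀ < lam ^ c :=
        max_lt (max_lt hcon h2c) hℵ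
      exact absurd (hle.trans (mul_le_max b (2 ^ c))) (not_le.mpr hmax)
theorem stmt18 (κ σ : Cardinal.{u}) (hκinf : Cardinal.aleph0 ≤ κ)
    (hκsing : κ.ord.cof < κ) (hσ : σ = κ.ord.cof)
    (κs : σ.ord.ToType → Cardinal.{u})
    (hreg : ∀ i, (κs i).IsRegular)
    (hmono : ∀ i j, i < j → κs i < κs j)
    (hbet : ∀ i, σ < κs i ∧ κs i < κ)
    (hsup : (⨆ i, κs i) = κ)
    (lam : Cardinal.{u}) (hlam : (2 : Cardinal.{u}) ^ κ < lam) :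
    lam ^ κ = (⨆ i, lam ^ κs i) ∧
    lam ^ κ = (⨆ i, covCof lam.ord.ToType (κs i)) := by
  have hκlam : κ < lam := (cantor κ).trans hlam
  have hlam0 : lam ≠ 0 := by
    rintro rfl; exact absurd hκlam (by simp)
  haveI : Nonempty σ.ord.ToType := by
    rw [Ordinal.toType_nonempty_iff_ne_zero]
    intro h0
    have hσ0 : σ = 0 := Cardinal.ord_eq_zero.mp h0
    have : ℵ₀ ≤ σ := by
      rw [hσ]
      exact Ordinal.aleph0_le_cof.mpr (Cardinal.isSuccLimit_ord hκinf)
    rw [hσ0] at this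
    exact absurd (le_zero_iff.mp this) aleph0_ne_zero
  have h1 : lam ^ κ = ⨆ i, lam ^ κs i := by
    apply le_antisymm
    · exact gmain κs hκinf hκsing hsup lam hlam
    · exact ciSup_le fun i => power_le_power_left hlam0 (hbet i).2.le
  refine ⟨h1, ?_⟩
  have h2 : ∀ i, covCof lam.ord.ToType (κs i) = lam ^ κs i := fun i =>
    covCof_eq (hreg i).aleph0_le ((hbet i).2.le.trans hκlam.le)
      ((power_le_power_left two_ne_zero (hbet i).2.le).trans_lt hlam)
  rw [h1]
  exact (iSup_congr h2).symm
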